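/- Let (W₁, (π₁, K₁)) and (W₂, (π₂, K₂)) be ĝ[σ]-module structures in category C, and let Φ : W₁ → W₂ be a linear map satisfying Φ∘π₁(u) = π₂(u)∘Φ for all u ∈ L(g,σ) and Φ∘K₁ = K₂∘Φ. Then Φ∘(π₁)_R(u) = (π₂)_R(u)∘Φ and Φ∘(π₁)_E(u) = (π₂)_E(u)∘Φ for all u ∈ L(g,σ). -/
import Mathlib


open scoped TensorProduct

noncomputable section
namespace Twisted

variable (g : Type) [LieRing g] [LieAlgebra ℂ g]

abbrev Amb : Type := LaurentPolynomial ℂ ⊗[ℂ] g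

instance : LieAlgebra ℂ (Amb g) :=
  { (inferInstance : Module ℂ (Amb g)) with
    lie_smul := fun c x y => by
      rw [← algebraMap_smul (LaurentPolynomial ℂ) c y,
        lie_smul (R := LaurentPolynomial ℂ) (algebraMap ℂ (LaurentPolynomial ℂ) c) x y,
        algebraMap_smul] }

/-- `ε = exp(2πi/N)`. -/
def eps (N : ℕ) : ℂ := Complex.exp (2 * (Real.pi : ℂ) * Complex.I / (N : ℂ))

variable (σ : g ≃ₗ⁅ℂ⁆ g) (N : ℕ)

/-- `a ∈ g_k`, i.e. `σ a = ε^k • a`. -/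
def homog (k : ℤ) (a : g) : Prop := σ a = eps N ^ k • a

/-- The generators `s^k ⊗ a`, for `a ∈ g_k`. -/
def genSet : Set (Amb g) :=
  {x | ∃ (k : ℤ) (a : g), homog g σ N k a ∧ x = LaurentPolynomial.T k ⊗ₜ[ℂ] a}

/-- The twisted loop algebra `L(g,σ)`, the Lie subalgebra of `ℂ[s,s⁻¹] ⊗ g`
spanned by the elements `s^k ⊗ a` with `a ∈ g_k`. -/
def Loop : LieSubalgebra ℂ (Amb g) := LieSubalgebra.lieSpan ℂ (Amb g) (genSet g σ N)

/-- The element `s^k ⊗ a` of `L(g,σ)`, for `a ∈ g_k`. -/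
def sGen (k : ℤ) (a : g) (h : homog g σ N k a) : Loop g σ N :=
  ⟨LaurentPolynomial.T k ⊗ₜ[ℂ] a, LieSubalgebra.subset_lieSpan ⟨k, a, h, rfl⟩⟩

/-- The element `(s^k p(s^N)) ⊗ a` of `L(g,σ)`, for `a ∈ g_k`. -/
def sPolyGen (p : Polynomial ℂ) (k : ℤ) (a : g)
    (h : ∀ i : ℕ, homog g σ N (k + N * i) a) : Loop g σ N :=
  ∑ i ∈ Finset.range (p.natDegree + 1), p.coeff i • sGen g σ N (k + N * i) a (h i)

variable (N : ℕ) (W : Type) [AddCommGroup W] [Module ℂ W]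

/-- The shift operator on `F(W) = (ℤ → End W)`, encoding multiplication by `x`:
`(x·a)_k = a_{k+N}`. -/
def shiftE : Module.End ℂ (ℤ → Module.End ℂ W) where
  toFun a := fun k => a (k + N)
  map_add' _ _ := rfl
  map_smul' _ _ := rfl

/-- The action of `ℂ[x]` on `F(W)`. -/
def polyAct (p : Polynomial ℂ) (a : ℤ → Module.End ℂ W) : ℤ → Module.End ℂ W :=
  Polynomial.aeval (shiftE N W) p a

/-- Membership in `E(W)`. -/
def memE (a : ℤ → Module.End ℂ W) : Prop :=
  ∀ w : W, ∃ M : ℤ, ∀ k ≥ M, a k w = 0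

/-- Membership in `Ē(W)`. -/
def memEbar (a : ℤ → Module.End ℂ W) : Prop :=
  ∃ p : Polynomial ℂ, p ≠ 0 ∧ memE W (polyAct N W p a)

/-- Membership in `Ē₀(W)`. -/
def memE0 (a : ℤ → Module.End ℂ W) : Prop :=
  ∃ p : Polynomial ℂ, p ≠ 0 ∧ polyAct N W p a = 0

variable (g : Type) [LieRing g] [LieAlgebra ℂ g] (σ : g ≃ₗ⁅ℂ⁆ g) (N : ℕ)
variable (B : LinearMap.BilinForm ℂ g)

/-- `γ` is the bilinear form on `L(g,σ)` with
`γ(s^m ⊗ a, s^n ⊗ b) = (m/N) B(a,b) δ_{m+n,0}`. -/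
def IsGamma (γ : Loop g σ N →ₗ[ℂ] Loop g σ N →ₗ[ℂ] ℂ) : Prop :=
  ∀ (m n : ℤ) (a b : g) (ha : homog g σ N m a) (hb : homog g σ N n b),
    γ (sGen g σ N m a ha) (sGen g σ N n b hb) =
      if m + n = 0 then (m : ℂ) / (N : ℂ) * B a b else 0

variable (W : Type) [AddCommGroup W] [Module ℂ W]

/-- `(π, K)` is a `ĝ[σ]`-module structure on `W` (relative to the form `γ`). -/
def IsHatMod (π : Loop g σ N →ₗ[ℂ] Module.End ℂ W) (K : Module.End ℂ W)
    (γ : Loop g σ N →ₗ[ℂ] Loop g σ N →ₗ[ℂ] ℂ) : Prop :=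
  (∀ u, K * π u = π u * K) ∧
  (∀ u v, π u * π v - π v * π u = π ⁅u, v⁆ + γ u v • K)

/-- `(π, K)` is restricted. -/
def IsRestricted (π : Loop g σ N →ₗ[ℂ] Module.End ℂ W) : Prop :=
  ∀ (w : W) (i : ℤ) (a : g), homog g σ N i a →
    ∃ M : ℤ, ∀ k ≥ M, ∀ h : homog g σ N k a, π (sGen g σ N k a h) w = 0

/-- `(π, K)` is irreducible. -/
def IsIrred (π : Loop g σ N →ₗ[ℂ] Module.End ℂ W) (K : Module.End ℂ W) : Prop :=
  Nontrivial W ∧ ∀ S : Submodule ℂ W, (∀ x ∈ S, K x ∈ S) →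
    (∀ u, ∀ x ∈ S, π u x ∈ S) → S = ⊥ ∨ S = ⊤

open scoped Classical in
/-- The generating function `π_a ∈ F(W)` attached to a homogeneous element `a`. -/
def piFun (π : Loop g σ N →ₗ[ℂ] Module.End ℂ W) (a : g) : ℤ → Module.End ℂ W :=
  fun k => if h : homog g σ N k a then π (sGen g σ N k a h) else 0

/-- `(π, K)` lies in category `C`. -/
def InCatC (π : Loop g σ N →ₗ[ℂ] Module.End ℂ W) : Prop :=
  ∃ p : Polynomial ℂ, p ≠ 0 ∧ ∀ (i : ℤ) (a : g), homog g σ N i a →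
    memE W (polyAct N W p (piFun g σ N W π a))

/-- `πR` is the map `π_R` determined by `π_R(s^k ⊗ a) = (ψ_R(π_a))_k`,
where `ψ_R(π_a)` is the projection of `π_a` to `E(W)` along `Ē₀(W)`. -/
def IsPiR (π πR : Loop g σ N →ₗ[ℂ] Module.End ℂ W) : Prop :=
  ∀ a : g, (∃ i : ℤ, homog g σ N i a) →
    ∃ e : ℤ → Module.End ℂ W, memE W e ∧ memE0 N W (piFun g σ N W π a - e) ∧
      ∀ (k : ℤ) (h : homog g σ N k a), πR (sGen g σ N k a h) = e k


/-! ### Auxiliary lemmas for Statement 17 -/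

lemma shiftE_pow_apply (N : ℕ) (W : Type) [AddCommGroup W] [Module ℂ W]
    (i : ℕ) (a : ℤ → Module.End ℂ W) (j : ℤ) :
    ((shiftE N W ^ i) a) j = a (j + N * i) := by
  induction i generalizing a j with
  | zero => simp
  | succ i ih =>
    rw [pow_succ']
    have : ((shiftE N W * shiftE N W ^ i) a) j = ((shiftE N W ^ i) a) (j + N) := rfl
    rw [this, ih]
    congr 1
    push_cast
    ring

lemma polyAct_apply (N : ℕ) (W : Type) [AddCommGroup W] [Module ℂ W]
    (q : Polynomial ℂ) (a : ℤ → Module.End ℂ W) (j : ℤ) :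
    polyAct N W q a j =
      ∑ i ∈ Finset.range (q.natDegree + 1), q.coeff i • a (j + N * i) := by
  unfold polyAct
  rw [Polynomial.aeval_eq_sum_range]
  simp only [LinearMap.sum_apply, LinearMap.smul_apply, Finset.sum_apply, Pi.smul_apply]
  exact Finset.sum_congr rfl fun i _ => by rw [shiftE_pow_apply]

lemma vanish_of_rec {V : Type} [AddCommGroup V] [Module ℂ V] (N : ℕ) (hN : 0 < N)
    (d : ℤ → V) (q : Polynomial ℂ) (hq : q ≠ 0)
    (hrec : ∀ j : ℤ, ∑ i ∈ Finset.range (q.natDegree + 1), q.coeff i • d (j + N * i) = 0)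
    (M : ℤ) (hM : ∀ j ≥ M, d j = 0) : ∀ j, d j = 0 := by
  set m := q.natTrailingDegree with hm
  have hcm : q.coeff m ≠ 0 := Polynomial.coeff_natTrailingDegree_ne_zero.mpr hq
  have hmle : m ≤ q.natDegree := by rw [hm]; exact Polynomial.natTrailingDegree_le_natDegree q
  have key : ∀ t : ℕ, ∀ j : ℤ, M - (t : ℤ) * N ≤ j → d j = 0 := by
    intro t
    induction t with
    | zero => intro j hj; exact hM j (by simpa using hj)
    | succ t ih =>
      intro j hj
      have hj' : M - ((t : ℤ) + 1) * N ≤ j := by push_cast at hj; linarith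
      have h0 := hrec (j - N * m)
      have hsum : ∀ i ∈ Finset.range (q.natDegree + 1),
          q.coeff i • d (j - N * m + N * i) = if i = m then q.coeff m • d j else 0 := by
        intro i _
        rcases lt_trichotomy i m with h | h | h
        · rw [if_neg h.ne, Polynomial.coeff_eq_zero_of_lt_natTrailingDegree h, zero_smul]
        · subst h
          rw [if_pos rfl]
          congr 1
          ring_nf
        · rw [if_neg h.ne']
          have hni : (N : ℤ) * m + N ≤ N * i := by
            have h1 : (m : ℤ) + 1 ≤ i := by exact_mod_cast h
            have h2 : (N : ℤ) * (m + 1) ≤ N * i :=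
              mul_le_mul_of_nonneg_left h1 (by positivity)
            linarith [h2, (by ring : (N : ℤ) * ((m : ℤ) + 1) = N * m + N)]
          have : d (j - N * m + N * i) = 0 := by
            apply ih
            linarith
          rw [this, smul_zero]
      rw [Finset.sum_congr rfl hsum, Finset.sum_ite_eq' _ m _,
        if_pos (Finset.mem_range.mpr (Nat.lt_succ_of_le hmle))] at h0
      have := congrArg (fun v => (q.coeff m)⁻¹ • v) h0
      simpa [smul_smul, inv_mul_cancel₀ hcm] using this
  intro j
  apply key (M - j).toNat
  have h1 : (M - j : ℤ) ≤ ((M - j).toNat : ℤ) := Int.self_le_toNat _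
  have h2 : ((M - j).toNat : ℤ) ≤ ((M - j).toNat : ℤ) * N :=
    le_mul_of_one_le_right (Int.ofNat_nonneg _) (by exact_mod_cast hN)
  linarith

/-- The analytic core: a homomorphism intertwines the `E`-parts of the
decompositions of the generating functions. -/
lemma core_intertwine
    (g : Type) [LieRing g] [LieAlgebra ℂ g] (σ : g ≃ₗ⁅ℂ⁆ g) (N : ℕ) (hN : 0 < N)
    (W₁ W₂ : Type) [AddCommGroup W₁] [Module ℂ W₁] [AddCommGroup W₂] [Module ℂ W₂]
    (π₁ : Loop g σ N →ₗ[ℂ] Module.End ℂ W₁) (π₂ : Loop g σ N →ₗ[ℂ] Module.End ℂ W₂)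
    (Φ : W₁ →ₗ[ℂ] W₂)
    (hΦπ : ∀ (u : Loop g σ N) (w : W₁), Φ (π₁ u w) = π₂ u (Φ w))
    (a : g) (e₁ : ℤ → Module.End ℂ W₁) (e₂ : ℤ → Module.End ℂ W₂)
    (he₁ : memE W₁ e₁) (h0₁ : memE0 N W₁ (piFun g σ N W₁ π₁ a - e₁))
    (he₂ : memE W₂ e₂) (h0₂ : memE0 N W₂ (piFun g σ N W₂ π₂ a - e₂)) :
    ∀ (k : ℤ) (w : W₁), Φ (e₁ k w) = e₂ k (Φ w) := by
  intro k w
  obtain ⟨p₁, hp₁, hz₁⟩ := h0₁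
  obtain ⟨p₂, hp₂, hz₂⟩ := h0₂
  set q := p₁ * p₂ with hqdef
  have hq : q ≠ 0 := mul_ne_zero hp₁ hp₂
  have hq₁ : polyAct N W₁ q (piFun g σ N W₁ π₁ a - e₁) = 0 := by
    unfold polyAct at hz₁ ⊢
    rw [hqdef, mul_comm p₁ p₂, map_mul, Module.End.mul_apply, hz₁, map_zero]
  have hq₂ : polyAct N W₂ q (piFun g σ N W₂ π₂ a - e₂) = 0 := by
    unfold polyAct at hz₂ ⊢
    rw [hqdef, map_mul, Module.End.mul_apply, hz₂, map_zero]
  have hpi : ∀ k : ℤ, Φ (piFun g σ N W₁ π₁ a k w) = piFun g σ N W₂ π₂ a k (Φ w) := by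
    intro k
    unfold piFun
    split
    · exact hΦπ _ w
    · simp
  set d : ℤ → W₂ := fun k => Φ (e₁ k w) - e₂ k (Φ w) with hd
  have hdeq : ∀ k : ℤ, d k =
      ((piFun g σ N W₂ π₂ a - e₂) k) (Φ w) - Φ (((piFun g σ N W₁ π₁ a - e₁) k) w) := by
    intro k
    simp only [hd, Pi.sub_apply, LinearMap.sub_apply, map_sub, hpi k]
    abel
  have hrec : ∀ j : ℤ, ∑ i ∈ Finset.range (q.natDegree + 1), q.coeff i • d (j + N * i) = 0 := by
    intro j
    have A1 : Φ ((polyAct N W₁ q (piFun g σ N W₁ π₁ a - e₁) j) w) = 0 := by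
      rw [hq₁]; simp
    have A2 : (polyAct N W₂ q (piFun g σ N W₂ π₂ a - e₂) j) (Φ w) = 0 := by
      rw [hq₂]; simp
    rw [polyAct_apply] at A1 A2
    simp only [LinearMap.sum_apply, LinearMap.smul_apply, map_sum, map_smul] at A1 A2
    calc ∑ i ∈ Finset.range (q.natDegree + 1), q.coeff i • d (j + N * i)
        = ∑ i ∈ Finset.range (q.natDegree + 1),
            (q.coeff i • ((piFun g σ N W₂ π₂ a - e₂) (j + N * i)) (Φ w)
              - q.coeff i • Φ (((piFun g σ N W₁ π₁ a - e₁) (j + N * i)) w)) := by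
          refine Finset.sum_congr rfl fun i _ => ?_
          rw [hdeq, smul_sub]
      _ = 0 := by rw [Finset.sum_sub_distrib, A1, A2, sub_zero]
  obtain ⟨M₁, hM₁⟩ := he₁ w
  obtain ⟨M₂, hM₂⟩ := he₂ (Φ w)
  have hM : ∀ j ≥ max M₁ M₂, d j = 0 := by
    intro j hj
    simp only [hd, hM₁ j (le_trans (le_max_left _ _) hj),
      hM₂ j (le_trans (le_max_right _ _) hj), map_zero, sub_zero]
  have := vanish_of_rec N hN d q hq hrec (max M₁ M₂) hM k
  simpa [hd, sub_eq_zero] using this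

lemma eps_ne_zero (N : ℕ) : eps N ≠ 0 := Complex.exp_ne_zero _

lemma homog_lie (g : Type) [LieRing g] [LieAlgebra ℂ g] (σ : g ≃ₗ⁅ℂ⁆ g) (N : ℕ)
    {m n : ℤ} {a b : g} (ha : homog g σ N m a) (hb : homog g σ N n b) :
    homog g σ N (m + n) ⁅a, b⁆ := by
  unfold homog at ha hb ⊢
  rw [LieEquiv.map_lie, ha, hb, smul_lie, lie_smul, smul_smul,
    ← zpow_add₀ (eps_ne_zero N)]

lemma mem_span_genSet (g : Type) [LieRing g] [LieAlgebra ℂ g] (σ : g ≃ₗ⁅ℂ⁆ g) (N : ℕ)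
    (u : Loop g σ N) : (u : Amb g) ∈ Submodule.span ℂ (genSet g σ N) := by
  let K : LieSubalgebra ℂ (Amb g) :=
    { Submodule.span ℂ (genSet g σ N) with
      lie_mem' := by
        intro x y hx hy
        show ⁅x, y⁆ ∈ Submodule.span ℂ (genSet g σ N)
        refine Submodule.span_induction₂
          (p := fun x y _ _ => ⁅x, y⁆ ∈ Submodule.span ℂ (genSet g σ N))
          ?_ ?_ ?_ ?_ ?_ ?_ ?_ hx hy
        · rintro x y ⟨m, a, ha, rfl⟩ ⟨n, b, hb, rfl⟩
          refine Submodule.subset_span ⟨m + n, ⁅a, b⁆, homog_lie g σ N ha hb, ?_⟩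
          rw [LieAlgebra.ExtendScalars.bracket_tmul, LaurentPolynomial.T_add]
        · intro y _
          have h : ⁅(0 : Amb g), y⁆ = 0 := zero_lie y
          rw [h]; exact Submodule.zero_mem _
        · intro x _
          have h : ⁅x, (0 : Amb g)⁆ = 0 := lie_zero x
          rw [h]; exact Submodule.zero_mem _
        · intro x y z _ _ _ h1 h2
          have h : ⁅x + y, z⁆ = ⁅x, z⁆ + ⁅y, z⁆ := add_lie x y z
          rw [h]; exact Submodule.add_mem _ h1 h2
        · intro x y z _ _ _ h1 h2
          have h : ⁅x, y + z⁆ = ⁅x, y⁆ + ⁅x, z⁆ := lie_add x y z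
          rw [h]; exact Submodule.add_mem _ h1 h2
        · intro r x y _ _ h1
          have h : ⁅r • x, y⁆ = r • ⁅x, y⁆ := smul_lie r x y
          rw [h]; exact Submodule.smul_mem _ _ h1
        · intro r x y _ _ h1
          have h : ⁅x, r • y⁆ = r • ⁅x, y⁆ := lie_smul r x y
          rw [h]; exact Submodule.smul_mem _ _ h1 }
  have hle : Loop g σ N ≤ K :=
    LieSubalgebra.lieSpan_le.mpr (fun x hx => Submodule.subset_span hx)
  exact hle u.2


/-- A homomorphism of `ĝ[σ]`-module structures in category `C`
intertwines the factorizations: `Φ∘(π₁)_R(u) = (π₂)_R(u)∘Φ` and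
`Φ∘(π₁)_E(u) = (π₂)_E(u)∘Φ` for all `u ∈ L(g,σ)`, where `π_E = π − π_R`. -/
theorem statement17
    (g : Type) [LieRing g] [LieAlgebra ℂ g] [LieAlgebra.IsSimple ℂ g]
    [FiniteDimensional ℂ g]
    (N : ℕ) (hN : 0 < N) (σ : g ≃ₗ⁅ℂ⁆ g) (hσ : ∀ a : g, (⇑σ)^[N] a = a)
    (B : LinearMap.BilinForm ℂ g)
    (hBsymm : ∀ a b : g, B a b = B b a)
    (hBinv : ∀ a b c : g, B ⁅a, b⁆ c = B a ⁅b, c⁆)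
    (hBnd : ∀ a : g, (∀ b : g, B a b = 0) → a = 0)
    (W₁ W₂ : Type) [AddCommGroup W₁] [Module ℂ W₁] [AddCommGroup W₂] [Module ℂ W₂]
    (π₁ πR₁ : Loop g σ N →ₗ[ℂ] Module.End ℂ W₁) (K₁ : Module.End ℂ W₁)
    (π₂ πR₂ : Loop g σ N →ₗ[ℂ] Module.End ℂ W₂) (K₂ : Module.End ℂ W₂)
    (γ : Loop g σ N →ₗ[ℂ] Loop g σ N →ₗ[ℂ] ℂ) (hγ : IsGamma g σ N B γ)
    (hmod₁ : IsHatMod g σ N W₁ π₁ K₁ γ) (hC₁ : InCatC g σ N W₁ π₁)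
    (hmod₂ : IsHatMod g σ N W₂ π₂ K₂ γ) (hC₂ : InCatC g σ N W₂ π₂)
    (hπR₁ : IsPiR g σ N W₁ π₁ πR₁) (hπR₂ : IsPiR g σ N W₂ π₂ πR₂)
    (Φ : W₁ →ₗ[ℂ] W₂)
    (hΦπ : ∀ (u : Loop g σ N) (w : W₁), Φ (π₁ u w) = π₂ u (Φ w))
    (hΦK : ∀ w : W₁, Φ (K₁ w) = K₂ (Φ w)) :
    (∀ (u : Loop g σ N) (w : W₁), Φ (πR₁ u w) = πR₂ u (Φ w)) ∧
    (∀ (u : Loop g σ N) (w : W₁), Φ ((π₁ - πR₁) u w) = (π₂ - πR₂) u (Φ w)) := by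
  have hsub : Submodule.span ℂ (genSet g σ N) ≤ (Loop g σ N).toSubmodule :=
    Submodule.span_le.mpr (fun x hx => LieSubalgebra.subset_lieSpan hx)
  have main : ∀ (u : Loop g σ N) (w : W₁), Φ (πR₁ u w) = πR₂ u (Φ w) := by
    intro u
    have hu : (u : Amb g) ∈ Submodule.span ℂ (genSet g σ N) := mem_span_genSet g σ N u
    have step : ∀ (x : Amb g), x ∈ Submodule.span ℂ (genSet g σ N) →
        ∀ (hxL : x ∈ Loop g σ N) (w : W₁),
        Φ (πR₁ ⟨x, hxL⟩ w) = πR₂ ⟨x, hxL⟩ (Φ w) := by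
      intro x hx
      induction hx using Submodule.span_induction with
      | mem x hmem =>
        obtain ⟨k, a, ha, rfl⟩ := hmem
        intro hxL w
        obtain ⟨e₁, he₁, h0₁, hval₁⟩ := hπR₁ a ⟨k, ha⟩
        obtain ⟨e₂, he₂, h0₂, hval₂⟩ := hπR₂ a ⟨k, ha⟩
        have hgen : (⟨LaurentPolynomial.T k ⊗ₜ[ℂ] a, hxL⟩ : Loop g σ N)
            = sGen g σ N k a ha := rfl
        rw [hgen, hval₁ k ha, hval₂ k ha]
        exact core_intertwine g σ N hN W₁ W₂ π₁ π₂ Φ hΦπ a e₁ e₂ he₁ h0₁ he₂ h0₂ k w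
      | zero =>
        intro hxL w
        have : (⟨0, hxL⟩ : Loop g σ N) = 0 := rfl
        rw [this]
        simp
      | add x y hx hy ihx ihy =>
        intro hxL w
        have hx' : x ∈ Loop g σ N := hsub hx
        have hy' : y ∈ Loop g σ N := hsub hy
        have : (⟨x + y, hxL⟩ : Loop g σ N) = ⟨x, hx'⟩ + ⟨y, hy'⟩ := rfl
        rw [this, map_add, map_add]
        simp only [LinearMap.add_apply, map_add, ihx hx' w, ihy hy' w]
      | smul c x hx ihx =>
        intro hxL w
        have hx' : x ∈ Loop g σ N := hsub hx
        have : (⟨c • x, hxL⟩ : Loop g σ N) = c • (⟨x, hx'⟩ : Loop g σ N) := rfl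
        rw [this, map_smul, map_smul]
        simp only [LinearMap.smul_apply, map_smul, ihx hx' w]
    intro w
    have := step (u : Amb g) hu u.2 w
    simpa using this
  refine ⟨main, fun u w => ?_⟩
  simp only [LinearMap.sub_apply, map_sub, hΦπ u w, main u w]


end Twisted
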